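/- Let σ₊, δ₋ > 0 and set K := (1/4)·(σ₊/δ₋ + δ₋/σ₊)². Then the product of the Gaussian conditional variances satisfies (Δx₁|_{x₂})²·(Δq₁|_{q₂})² = (2/(σ₊²+δ₋²))·(σ₊²δ₋²/(2(σ₊²+δ₋²))) = σ₊²δ₋²/(σ₊²+δ₋²)² = 1/(4K). Moreover K ≥ 1, so that (Δx₁|_{x₂})²·(Δq₁|_{q₂})² ≤ 1/4, with equality if and only if σ₊ = δ₋. -/

import Mathlib

/-- For `σ₊, δ₋ > 0` and Schmidt number `K = (1/4)(σ₊/δ₋ + δ₋/σ₊)²`, the product of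
the Gaussian conditional variances `(Δx₁|_{x₂})² = 2/(σ₊²+δ₋²)` and
`(Δq₁|_{q₂})² = σ₊²δ₋²/(2(σ₊²+δ₋²))` equals `σ₊²δ₋²/(σ₊²+δ₋²)² = 1/(4K)`.
Moreover `K ≥ 1`, so the product is at most `1/4`, with equality iff `σ₊ = δ₋`. -/
theorem epr_product_eq_inv_schmidt (σp δm : ℝ) (hσ : 0 < σp) (hδ : 0 < δm) :
    (2 / (σp ^ 2 + δm ^ 2)) * (σp ^ 2 * δm ^ 2 / (2 * (σp ^ 2 + δm ^ 2)))
        = σp ^ 2 * δm ^ 2 / (σp ^ 2 + δm ^ 2) ^ 2 ∧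
    σp ^ 2 * δm ^ 2 / (σp ^ 2 + δm ^ 2) ^ 2
        = 1 / (4 * ((1 / 4) * (σp / δm + δm / σp) ^ 2)) ∧
    1 ≤ (1 / 4) * (σp / δm + δm / σp) ^ 2 ∧
    (2 / (σp ^ 2 + δm ^ 2)) * (σp ^ 2 * δm ^ 2 / (2 * (σp ^ 2 + δm ^ 2))) ≤ 1 / 4 ∧
    ((2 / (σp ^ 2 + δm ^ 2)) * (σp ^ 2 * δm ^ 2 / (2 * (σp ^ 2 + δm ^ 2))) = 1 / 4
        ↔ σp = δm) := by
  have hσ' := hσ.ne'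
  have hδ' := hδ.ne'
  have hs : (0:ℝ) < σp ^ 2 + δm ^ 2 := by positivity
  have hs' := hs.ne'
  have h1 : (2 / (σp ^ 2 + δm ^ 2)) * (σp ^ 2 * δm ^ 2 / (2 * (σp ^ 2 + δm ^ 2)))
      = σp ^ 2 * δm ^ 2 / (σp ^ 2 + δm ^ 2) ^ 2 := by
    field_simp
  have h2 : σp ^ 2 * δm ^ 2 / (σp ^ 2 + δm ^ 2) ^ 2
      = 1 / (4 * ((1 / 4) * (σp / δm + δm / σp) ^ 2)) := by
    field_simp
  have hsq : (0:ℝ) ≤ (σp - δm)^2 := sq_nonneg _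
  have h3 : 1 ≤ (1 / 4) * (σp / δm + δm / σp) ^ 2 := by
    have h : (1/4) * (σp / δm + δm / σp) ^ 2 = (σp^2+δm^2)^2 / (4*(σp*δm)^2) := by
      field_simp
    rw [h, le_div_iff₀ (by positivity)]
    nlinarith [sq_nonneg (σp^2 - δm^2)]
  have h4 : (2 / (σp ^ 2 + δm ^ 2)) * (σp ^ 2 * δm ^ 2 / (2 * (σp ^ 2 + δm ^ 2))) ≤ 1 / 4 := by
    rw [h1, div_le_div_iff₀ (by positivity) (by norm_num)]
    nlinarith [sq_nonneg (σp^2 - δm^2)]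
  refine ⟨h1, h2, h3, h4, ?_⟩
  rw [h1, div_eq_div_iff (by positivity) (by norm_num)]
  constructor
  · intro h
    have : (σp^2 - δm^2)^2 = 0 := by nlinarith
    have h2' : σp^2 = δm^2 := by nlinarith [sq_nonneg (σp^2 - δm^2)]
    nlinarith
  · intro h; subst h; ring
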